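/- arXiv:2012.13837 — 3 statements merged into one kernel-verified Lean document; each statement's English description precedes it below -/
import Mathlib

section
/- Let F be a Borel probability measure on ℝ^d with density f with respect to Lebesgue measure, and let w : ℝ^d → (0, ∞) be a measurable weight function. Let γ > 0 and suppose the set Q_J = {x : f(x) > γ·w(x)} satisfies F(Q_J) = α with 0 < α < 1 and ∫_{Q_J} w(x) dx < ∞. Then Q_J minimizes the weighted measure among all sets of coverage at least α: every Borel set Q with F(Q) ≥ α satisfies ∫_Q w(x) dx ≥ ∫_{Q_J} w(x) dx. -/
open MeasureTheory Set
open scoped ENNReal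

/-- Let `F` be a Borel probability measure on `ℝ^d` with density `f`, and let
`w : ℝ^d → (0,∞)` be a measurable weight function.  Let `γ > 0` and suppose that the set
`QJ = {x | f x > γ * w x}` satisfies `F QJ = α` with `0 < α < 1` and `∫_{QJ} w < ∞`.  Then
`QJ` minimises the weighted measure among all Borel sets of coverage at least `α`:
every Borel `Q` with `F Q ≥ α` satisfies `∫_Q w ≥ ∫_{QJ} w`. -/
theorem jhpd_minimal_weighted_measure {d : ℕ}
    (F : Measure (Fin d → ℝ)) [IsProbabilityMeasure F]
    (f : (Fin d → ℝ) → ℝ) (hf : Measurable f)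
    (hF : F = volume.withDensity (fun x => ENNReal.ofReal (f x)))
    (w : (Fin d → ℝ) → ℝ) (hw : Measurable w) (hwpos : ∀ x, 0 < w x)
    (γ : ℝ) (hγ : 0 < γ)
    (α : ℝ) (hα0 : 0 < α) (hα1 : α < 1)
    (hQJ : F {x | γ * w x < f x} = ENNReal.ofReal α)
    (hfin : ∫⁻ x in {x | γ * w x < f x}, ENNReal.ofReal (w x) < ⊤) :
    ∀ Q : Set (Fin d → ℝ), MeasurableSet Q → ENNReal.ofReal α ≤ F Q →
      ∫⁻ x in {x | γ * w x < f x}, ENNReal.ofReal (w x) ≤ ∫⁻ x in Q, ENNReal.ofReal (w x) := by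
  intro Q hQ hFQ
  set QJ := {x | γ * w x < f x} with hQJdef
  have hQJm : MeasurableSet QJ := measurableSet_lt (hw.const_mul γ) hf
  set ν := volume.withDensity (fun x => ENNReal.ofReal (w x)) with hν
  have hν_apply : ∀ S : Set (Fin d → ℝ), MeasurableSet S →
      ν S = ∫⁻ x in S, ENNReal.ofReal (w x) := fun S hS => withDensity_apply _ hS
  have hF_apply : ∀ S : Set (Fin d → ℝ), MeasurableSet S →
      F S = ∫⁻ x in S, ENNReal.ofReal (f x) := by
    intro S hS; rw [hF, withDensity_apply _ hS]
  have hγ0 : ENNReal.ofReal γ ≠ 0 := (ENNReal.ofReal_pos.2 hγ).ne'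
  have hγtop : ENNReal.ofReal γ ≠ ⊤ := ENNReal.ofReal_ne_top
  -- key 1 : on QJ \ Q we have ofReal w ≤ (ofReal γ)⁻¹ * ofReal f
  have key1 : ν (QJ \ Q) ≤ (ENNReal.ofReal γ)⁻¹ * F (QJ \ Q) := by
    rw [hν_apply _ (hQJm.diff hQ), hF_apply _ (hQJm.diff hQ),
      ← lintegral_const_mul _ hf.ennreal_ofReal]
    refine setLIntegral_mono (by fun_prop) ?_
    intro x hx
    have hxQJ : γ * w x ≤ f x := le_of_lt hx.1
    have : ENNReal.ofReal γ * ENNReal.ofReal (w x) ≤ ENNReal.ofReal (f x) := by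
      rw [← ENNReal.ofReal_mul hγ.le]; exact ENNReal.ofReal_le_ofReal hxQJ
    calc ENNReal.ofReal (w x)
        = (ENNReal.ofReal γ)⁻¹ * (ENNReal.ofReal γ * ENNReal.ofReal (w x)) := by
          rw [← mul_assoc, ENNReal.inv_mul_cancel hγ0 hγtop, one_mul]
      _ ≤ (ENNReal.ofReal γ)⁻¹ * ENNReal.ofReal (f x) := by
          exact mul_le_mul_right this _
  -- key 2 : on Q \ QJ we have ofReal f ≤ ofReal γ * ofReal w
  have key2 : (ENNReal.ofReal γ)⁻¹ * F (Q \ QJ) ≤ ν (Q \ QJ) := by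
    have h2 : F (Q \ QJ) ≤ ENNReal.ofReal γ * ν (Q \ QJ) := by
      rw [hν_apply _ (hQ.diff hQJm), hF_apply _ (hQ.diff hQJm),
        ← lintegral_const_mul _ hw.ennreal_ofReal]
      refine setLIntegral_mono (by fun_prop) ?_
      intro x hx
      have hxf : f x ≤ γ * w x := not_lt.1 hx.2
      rw [← ENNReal.ofReal_mul hγ.le]
      exact ENNReal.ofReal_le_ofReal hxf
    calc (ENNReal.ofReal γ)⁻¹ * F (Q \ QJ)
        ≤ (ENNReal.ofReal γ)⁻¹ * (ENNReal.ofReal γ * ν (Q \ QJ)) :=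
          mul_le_mul_right h2 _
      _ = ν (Q \ QJ) := by
          rw [← mul_assoc, ENNReal.inv_mul_cancel hγ0 hγtop, one_mul]
  -- coverage comparison: F (QJ \ Q) ≤ F (Q \ QJ)
  have hFcomp : F (QJ \ Q) ≤ F (Q \ QJ) := by
    have hsplit1 : F (QJ ∩ Q) + F (QJ \ Q) = F QJ := measure_inter_add_diff QJ hQ
    have hsplit2 : F (Q ∩ QJ) + F (Q \ QJ) = F Q := measure_inter_add_diff Q hQJm
    have hle : F QJ ≤ F Q := hQJ ▸ hFQ
    rw [← hsplit1, ← hsplit2, inter_comm Q QJ] at hle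
    exact (ENNReal.add_le_add_iff_left (measure_ne_top F _)).1 hle
  -- diff comparison for ν
  have hνdiff : ν (QJ \ Q) ≤ ν (Q \ QJ) := key1.trans ((mul_le_mul_right hFcomp _).trans key2)
  -- assemble
  have h1 : ν (QJ ∩ Q) + ν (QJ \ Q) = ν QJ := measure_inter_add_diff QJ hQ
  have h2 : ν (Q ∩ QJ) + ν (Q \ QJ) = ν Q := measure_inter_add_diff Q hQJm
  rw [← hν_apply _ hQJm, ← hν_apply _ hQ, ← h1, ← h2, inter_comm Q QJ]
  exact add_le_add_right hνdiff _
end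

section
/- Let q : ℝ^d → [0,∞) be Borel measurable with 0 < c_q = ∫ q(x) dx < ∞, and let F be the probability measure with Lebesgue density f = q/c_q. Let 0 < α < 1 and γ > 0 with F({x : q(x) > γ}) = α, and set Q^α = {x : q(x) > γ}. Let X_1, X_2, … be i.i.d. with law F such that the CDF G of q(X_1) is continuous and strictly increasing on a neighborhood of γ (so G(γ) = 1 − α), and for n with ⌊(1−α)n⌋ ≥ 1 let γ̂_n be the ⌊(1−α)n⌋-th order statistic of q(X_1), …, q(X_n). Let μ be a Borel probability measure on ℝ^d with Lebesgue density, satisfying μ({x : q(x) = γ}) = 0, and let Z_1, Z_2, … be i.i.d. with law μ, independent of (X_j). Fix a Borel set Q and define FP_{m,n} = (1/m) Σ_{j=1}^m 1(q(Z_j) < γ̂_n)·1(Z_j ∈ Q) and FN_{m,n} = (1/m) Σ_{j=1}^m 1(q(Z_j) ≥ γ̂_n)·1(Z_j ∉ Q). Then FP_{m,n} + FN_{m,n} → μ(Q \ Q^α) + μ(Q^α \ Q) = μ(Q Δ Q^α) in probability as min(m,n) → ∞. -/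
open MeasureTheory Set Filter
open scoped ENNReal Topology symmDiff Classical

/-- The `k`-th order statistic (the `k`-th smallest value, `1 ≤ k ≤ n`) of the values
`Y 0 ω, …, Y (n-1) ω`: the least `t` such that at least `k` of the first `n` values are `≤ t`. -/
noncomputable def orderStat {Ω : Type*} (Y : ℕ → Ω → ℝ) (n k : ℕ) (ω : Ω) : ℝ :=
  sInf {t : ℝ | k ≤ ((Finset.range n).filter (fun j => Y j ω ≤ t)).card}

lemma orderStat_le_aux {Ω : Type*} {Y : ℕ → Ω → ℝ} {n k : ℕ} {ω : Ω} {t : ℝ}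
    (hk1 : 1 ≤ k)
    (hcard : k ≤ ((Finset.range n).filter (fun j => Y j ω ≤ t)).card) :
    orderStat Y n k ω ≤ t := by
  have hne : ((Finset.range n).filter (fun j => Y j ω ≤ t)).Nonempty := by
    rw [← Finset.card_pos]; omega
  have hn0 : (Finset.range n).Nonempty := hne.mono (Finset.filter_subset _ _)
  set b : ℝ := (Finset.range n).inf' hn0 (fun j => Y j ω) with hb
  apply csInf_le
  · refine ⟨b, fun s hs => ?_⟩
    simp only [Set.mem_setOf_eq] at hs
    have hnes : ((Finset.range n).filter (fun j => Y j ω ≤ s)).Nonempty := by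
      rw [← Finset.card_pos]; omega
    obtain ⟨j, hj⟩ := hnes
    simp only [Finset.mem_filter] at hj
    calc b ≤ Y j ω := Finset.inf'_le _ hj.1
      _ ≤ s := hj.2
  · exact hcard

lemma card_le_of_orderStat_lt_aux {Ω : Type*} {Y : ℕ → Ω → ℝ} {n k : ℕ} {ω : Ω} {t : ℝ}
    (hkn : k ≤ n) (hn : 0 < n) (h : orderStat Y n k ω < t) :
    k ≤ ((Finset.range n).filter (fun j => Y j ω ≤ t)).card := by
  have hn0 : (Finset.range n).Nonempty := by simp [Finset.nonempty_range_iff]; omega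
  set M : ℝ := (Finset.range n).sup' hn0 (fun j => Y j ω) with hM
  have hne : {s : ℝ | k ≤ ((Finset.range n).filter (fun j => Y j ω ≤ s)).card}.Nonempty := by
    refine ⟨M, ?_⟩
    simp only [Set.mem_setOf_eq]
    have : (Finset.range n).filter (fun j => Y j ω ≤ M) = Finset.range n := by
      apply Finset.filter_true_of_mem
      exact fun j hj => by rw [hM]; exact Finset.le_sup' (fun j => Y j ω) hj
    rw [this, Finset.card_range]; exact hkn
  obtain ⟨a, ha, hat⟩ := exists_lt_of_csInf_lt hne h
  simp only [Set.mem_setOf_eq] at ha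
  calc k ≤ ((Finset.range n).filter (fun j => Y j ω ≤ a)).card := ha
    _ ≤ ((Finset.range n).filter (fun j => Y j ω ≤ t)).card := by
        apply Finset.card_le_card
        intro j hj
        simp only [Finset.mem_filter] at hj ⊢
        exact ⟨hj.1, le_of_lt (lt_of_le_of_lt hj.2 hat)⟩

lemma cheb_aux {Ω β : Type*} [MeasurableSpace Ω] [MeasurableSpace β]
    (P : Measure Ω) [IsProbabilityMeasure P]
    (W : ℕ → Ω → β) (hW : ∀ j, Measurable (W j))
    (hind : ∀ i j, i ≠ j → ProbabilityTheory.IndepFun (W i) (W j) P)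
    (ν : Measure β) [IsProbabilityMeasure ν] (hlaw : ∀ j, P.map (W j) = ν)
    (S : Set β) (hS : MeasurableSet S) {c : ℝ} (hc : 0 < c) {n : ℕ} (hn : 0 < n) :
    P {ω | c ≤ |(n : ℝ)⁻¹ * ∑ j ∈ Finset.range n,
        (if W j ω ∈ S then (1 : ℝ) else 0) - (ν S).toReal|}
      ≤ ENNReal.ofReal (1 / (n * c ^ 2)) := by
  set p : ℝ := (ν S).toReal with hp
  set φ : β → ℝ := fun b => S.indicator (fun _ => (1 : ℝ)) b - p with hφ
  have hφmeas : Measurable φ := (measurable_const.indicator hS).sub measurable_const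
  have hφbd : ∀ b, |φ b| ≤ 1 := by
    intro b
    have hp0 : 0 ≤ p := ENNReal.toReal_nonneg
    have hp1 : p ≤ 1 := by
      have : ν S ≤ 1 := prob_le_one
      simpa [hp] using ENNReal.toReal_mono (by simp) this
    by_cases hb : b ∈ S <;> simp [hφ, Set.indicator_apply, hb, abs_le] <;> constructor <;> linarith
  set Y : ℕ → Ω → ℝ := fun j ω => φ (W j ω) with hY
  have hYmeas : ∀ j, Measurable (Y j) := fun j => hφmeas.comp (hW j)
  have hYint : ∀ j, Integrable (Y j) P := fun j =>
    (integrable_const (1 : ℝ)).mono' (hYmeas j).aestronglyMeasurable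
      (ae_of_all _ fun ω => by simpa using hφbd (W j ω))
  have hYmean : ∀ j, ∫ ω, Y j ω ∂P = 0 := by
    intro j
    have h1 : ∫ ω, Y j ω ∂P = ∫ b, φ b ∂(P.map (W j)) :=
      (integral_map (hW j).aemeasurable hφmeas.aestronglyMeasurable).symm
    rw [h1, hlaw j]
    have : ∫ b, φ b ∂ν = (∫ b, S.indicator (fun _ => (1 : ℝ)) b ∂ν) - ∫ _, p ∂ν := by
      apply integral_sub
      · exact (integrable_const (1 : ℝ)).mono'
          (measurable_const.indicator hS).aestronglyMeasurable
          (ae_of_all _ fun b => by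
            by_cases hb : b ∈ S <;> simp [Set.indicator_apply, hb])
      · exact integrable_const _
    rw [this, integral_indicator_const _ hS]
    simp [hp, measureReal_def]
  -- products
  have hprodint : ∀ i j, Integrable (fun ω => Y i ω * Y j ω) P := by
    intro i j
    refine (integrable_const (1 : ℝ)).mono'
      ((hYmeas i).mul (hYmeas j)).aestronglyMeasurable (ae_of_all _ fun ω => ?_)
    have := hφbd (W i ω); have := hφbd (W j ω)
    simp only [Real.norm_eq_abs, abs_mul]
    nlinarith [abs_nonneg (φ (W i ω)), abs_nonneg (φ (W j ω))]
  have hcross : ∀ i j, i ≠ j → ∫ ω, Y i ω * Y j ω ∂P = 0 := by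
    intro i j hij
    have hI : ProbabilityTheory.IndepFun (Y i) (Y j) P :=
      (hind i j hij).comp hφmeas hφmeas
    have := ProbabilityTheory.IndepFun.integral_mul_eq_mul_integral hI (hYmeas i).aestronglyMeasurable (hYmeas j).aestronglyMeasurable
    have heq : (fun ω => Y i ω * Y j ω) = Y i * Y j := rfl
    rw [heq, this, hYmean i, hYmean j]
    ring
  have hdiag : ∀ i, ∫ ω, Y i ω * Y i ω ∂P ≤ 1 := by
    intro i
    calc ∫ ω, Y i ω * Y i ω ∂P ≤ ∫ _ω, (1 : ℝ) ∂P := by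
          apply integral_mono (hprodint i i) (integrable_const 1)
          intro ω
          show Y i ω * Y i ω ≤ 1
          have := hφbd (W i ω)
          nlinarith [abs_nonneg (φ (W i ω)), le_abs_self (φ (W i ω)), neg_abs_le (φ (W i ω))]
      _ = 1 := by simp
  set D : Ω → ℝ := fun ω => ∑ j ∈ Finset.range n, Y j ω with hD
  have hDint2 : Integrable (fun ω => D ω ^ 2) P := by
    refine (integrable_const ((n : ℝ) ^ 2)).mono'
      ((Finset.measurable_sum _ fun j _ => hYmeas j).pow measurable_const
        |>.aestronglyMeasurable) (ae_of_all _ fun ω => ?_)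
    have hDb : |D ω| ≤ n := by
      calc |D ω| ≤ ∑ j ∈ Finset.range n, |Y j ω| := Finset.abs_sum_le_sum_abs _ _
        _ ≤ ∑ _j ∈ Finset.range n, (1 : ℝ) := Finset.sum_le_sum fun j _ => hφbd _
        _ = n := by simp
    have : D ω ^ 2 ≤ (n : ℝ) ^ 2 := by
      rw [← sq_abs]
      exact pow_le_pow_left₀ (abs_nonneg _) hDb 2
    simpa [abs_of_nonneg (sq_nonneg (D ω))] using this
  have hDvar : ∫ ω, D ω ^ 2 ∂P ≤ n := by
    have hexp : ∀ ω, D ω ^ 2 = ∑ i ∈ Finset.range n, ∑ j ∈ Finset.range n, Y i ω * Y j ω := by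
      intro ω
      rw [sq, hD, Finset.sum_mul_sum]
    calc ∫ ω, D ω ^ 2 ∂P
        = ∑ i ∈ Finset.range n, ∑ j ∈ Finset.range n, ∫ ω, Y i ω * Y j ω ∂P := by
          simp_rw [hexp]
          rw [integral_finset_sum _ fun i _ => integrable_finset_sum _ fun j _ => hprodint i j]
          exact Finset.sum_congr rfl fun i _ => integral_finset_sum _ fun j _ => hprodint i j
      _ = ∑ i ∈ Finset.range n, ∫ ω, Y i ω * Y i ω ∂P := by
          refine Finset.sum_congr rfl fun i hi => ?_
          exact Finset.sum_eq_single_of_mem i hi fun j _ hj => hcross i j (Ne.symm hj)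
      _ ≤ ∑ _i ∈ Finset.range n, (1 : ℝ) := Finset.sum_le_sum fun i _ => hdiag i
      _ = n := by simp
  -- Markov
  have hnR : (0 : ℝ) < n := Nat.cast_pos.mpr hn
  set a : ℝ := ((n : ℝ) * c) ^ 2 with ha
  have ha0 : 0 < a := by positivity
  have hmarkov := mul_meas_ge_le_integral_of_nonneg
    (ae_of_all P fun ω => sq_nonneg (D ω)) hDint2 a
  have hsub : {ω | c ≤ |(n : ℝ)⁻¹ * ∑ j ∈ Finset.range n,
      (if W j ω ∈ S then (1 : ℝ) else 0) - p|} ⊆ {ω | a ≤ D ω ^ 2} := by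
    intro ω hω
    simp only [Set.mem_setOf_eq] at hω ⊢
    have hDeq : D ω = (∑ j ∈ Finset.range n, (if W j ω ∈ S then (1 : ℝ) else 0)) - n * p := by
      show (∑ j ∈ Finset.range n, Y j ω) = _
      have hc : ∀ j ∈ Finset.range n, Y j ω = (if W j ω ∈ S then (1 : ℝ) else 0) - p :=
        fun j _ => by simp [hY, hφ, Set.indicator_apply]
      rw [Finset.sum_congr rfl hc, Finset.sum_sub_distrib]
      simp [mul_comm]
    have h2 : (n : ℝ)⁻¹ * ∑ j ∈ Finset.range n, (if W j ω ∈ S then (1 : ℝ) else 0) - p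
        = D ω / n := by
      rw [hDeq]; field_simp
    rw [h2] at hω
    have : (n : ℝ) * c ≤ |D ω| := by
      rw [abs_div, abs_of_pos hnR] at hω
      calc (n : ℝ) * c ≤ n * (|D ω| / n) := by
            exact mul_le_mul_of_nonneg_left hω (le_of_lt hnR)
        _ = |D ω| := by field_simp
    calc a = ((n : ℝ) * c) ^ 2 := rfl
      _ ≤ |D ω| ^ 2 := pow_le_pow_left₀ (by positivity) this 2
      _ = D ω ^ 2 := sq_abs _
  have hPle : P {ω | c ≤ |(n : ℝ)⁻¹ * ∑ j ∈ Finset.range n,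
      (if W j ω ∈ S then (1 : ℝ) else 0) - p|} ≤ P {ω | a ≤ D ω ^ 2} := measure_mono hsub
  have hfin : P {ω | a ≤ D ω ^ 2} ≠ ⊤ := measure_ne_top _ _
  have htoReal : (P {ω | a ≤ D ω ^ 2}).toReal ≤ 1 / (n * c ^ 2) := by
    have h1 : a * (P {ω | a ≤ D ω ^ 2}).toReal ≤ n := le_trans hmarkov hDvar
    have h2 : (P {ω | a ≤ D ω ^ 2}).toReal ≤ n / a := by
      rw [le_div_iff₀ ha0]; linarith [h1]
    calc (P {ω | a ≤ D ω ^ 2}).toReal ≤ n / a := h2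
      _ = 1 / (n * c ^ 2) := by rw [ha]; field_simp
  calc P {ω | c ≤ |(n : ℝ)⁻¹ * ∑ j ∈ Finset.range n,
        (if W j ω ∈ S then (1 : ℝ) else 0) - (ν S).toReal|}
      ≤ P {ω | a ≤ D ω ^ 2} := hPle
    _ ≤ ENNReal.ofReal (1 / (n * c ^ 2)) := by
        rw [ENNReal.le_ofReal_iff_toReal_le hfin (by positivity)]
        exact htoReal

lemma inv_bound_aux {c r : ℝ} (hc : 0 < c) (hr : 0 < r) {n : ℕ}
    (hn : 4 / (r * c ^ 2) ≤ n) (hn0 : 0 < n) : 1 / (n * c ^ 2) ≤ r / 4 := by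
  have hnR : (0 : ℝ) < n := Nat.cast_pos.mpr hn0
  have h4 : 4 ≤ (n : ℝ) * (r * c ^ 2) := by
    rw [div_le_iff₀ (by positivity)] at hn
    linarith [hn]
  rw [div_le_div_iff₀ (by positivity) (by norm_num)]
  nlinarith

set_option maxHeartbeats 2000000 in
/-- Let `q ≥ 0` have `0 < ∫ q = cq < ∞` and let `F` be the probability
measure with Lebesgue density `q / cq`.  Let `0 < α < 1`, `γ > 0`, `F {q > γ} = α` and
`Qα = {q > γ}`.  Let `X 0, X 1, …` be i.i.d. with law `F` such that the CDF `G` of `q (X 0)`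
is continuous and strictly increasing near `γ`, and let `γ̂ n` be the `⌊(1-α) n⌋`-th order
statistic of `q (X 0), …, q (X (n-1))`.  Let `μ` be a probability measure with a Lebesgue
density, with `μ {q = γ} = 0`, and let `Z 0, Z 1, …` be i.i.d. with law `μ`, independent of
the `X`'s.  For a fixed Borel set `Q`, define the empirical false-positive and
false-negative rates `FP m n` and `FN m n` on the first `m` test samples with threshold
`γ̂ n`.  Then `FP m n + FN m n → μ (Q \ Qα) + μ (Qα \ Q) = μ (Q ∆ Qα)` in probability as
`min (m, n) → ∞`. -/
theorem loss_estimator_consistent {d : ℕ}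
    (q : (Fin d → ℝ) → ℝ) (hqmeas : Measurable q) (hq0 : ∀ x, 0 ≤ q x)
    (cq : ℝ) (hcq_pos : 0 < cq)
    (hcq : ∫⁻ x, ENNReal.ofReal (q x) = ENNReal.ofReal cq)
    (F : Measure (Fin d → ℝ)) [IsProbabilityMeasure F]
    (hF : F = volume.withDensity (fun x => ENNReal.ofReal (q x / cq)))
    (α : ℝ) (hα0 : 0 < α) (hα1 : α < 1)
    (γ : ℝ) (hγ : 0 < γ)
    (hQα : F {x | γ < q x} = ENNReal.ofReal α)
    {Ω : Type*} [MeasurableSpace Ω] (P : Measure Ω) [IsProbabilityMeasure P]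
    (X Z : ℕ → Ω → (Fin d → ℝ))
    (hXmeas : ∀ j, Measurable (X j)) (hZmeas : ∀ j, Measurable (Z j))
    (hindep : ProbabilityTheory.iIndepFun (Sum.elim X Z) P)
    (hXlaw : ∀ j, P.map (X j) = F)
    (G : ℝ → ℝ) (hG : G = fun t => (F.map q (Set.Iic t)).toReal)
    (U : Set ℝ) (hU : U ∈ 𝓝 γ) (hGcont : ContinuousOn G U) (hGmono : StrictMonoOn G U)
    (μ : Measure (Fin d → ℝ)) [IsProbabilityMeasure μ]
    (g : (Fin d → ℝ) → ℝ≥0∞) (hμden : μ = volume.withDensity g)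
    (hμγ : μ {x | q x = γ} = 0)
    (hZlaw : ∀ j, P.map (Z j) = μ)
    (Q : Set (Fin d → ℝ)) (hQ : MeasurableSet Q)
    (γhat : ℕ → Ω → ℝ)
    (hγhat : γhat = fun n ω => orderStat (fun j ω' => q (X j ω')) n ⌊(1 - α) * n⌋₊ ω)
    (FP FN : ℕ → ℕ → Ω → ℝ)
    (hFP : FP = fun (m n : ℕ) (ω : Ω) => (m : ℝ)⁻¹ *
      ∑ j ∈ Finset.range m, if q (Z j ω) < γhat n ω ∧ Z j ω ∈ Q then (1 : ℝ) else 0)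
    (hFN : FN = fun (m n : ℕ) (ω : Ω) => (m : ℝ)⁻¹ *
      ∑ j ∈ Finset.range m, if γhat n ω ≤ q (Z j ω) ∧ Z j ω ∉ Q then (1 : ℝ) else 0) :
    μ (Q \ {x | γ < q x}) + μ ({x | γ < q x} \ Q) = μ (Q ∆ {x | γ < q x}) ∧
      TendstoInMeasure P (fun p : ℕ × ℕ => fun ω => FP p.1 p.2 ω + FN p.1 p.2 ω)
        atTop (fun _ => (μ (Q ∆ {x | γ < q x})).toReal) := by
  have hQαm : MeasurableSet {x | γ < q x} := measurableSet_lt measurable_const hqmeas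
  have hpart1 : μ (Q \ {x | γ < q x}) + μ ({x | γ < q x} \ Q) = μ (Q ∆ {x | γ < q x}) := by
    rw [Set.symmDiff_def, measure_union disjoint_sdiff_sdiff (hQαm.diff hQ)]
  refine ⟨hpart1, ?_⟩
  subst hγhat hFP hFN hG
  rw [tendstoInMeasure_iff_dist]
  intro ε hε
  rw [ENNReal.tendsto_nhds_zero]
  intro η hη
  obtain ⟨r, hr0, hrη⟩ : ∃ r : ℝ, 0 < r ∧ ENNReal.ofReal r ≤ η := by
    rcases eq_or_ne η ⊤ with h | h
    · exact ⟨1, one_pos, by simp [h]⟩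
    · exact ⟨η.toReal, ENNReal.toReal_pos hη.ne' h,
        le_of_eq (ENNReal.ofReal_toReal h)⟩
  -- basic independence facts
  have hXind : ∀ i j, i ≠ j → ProbabilityTheory.IndepFun (X i) (X j) P := fun i j hij =>
    hindep.indepFun (show (Sum.inl i : ℕ ⊕ ℕ) ≠ Sum.inl j from
      fun h => hij (Sum.inl.inj h))
  have hZind : ∀ i j, i ≠ j → ProbabilityTheory.IndepFun (Z i) (Z j) P := fun i j hij =>
    hindep.indepFun (show (Sum.inr i : ℕ ⊕ ℕ) ≠ Sum.inr j from
      fun h => hij (Sum.inr.inj h))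
  -- the CDF
  have hGval : ∀ t, (fun t => (F.map q (Set.Iic t)).toReal) t = (F (q ⁻¹' Set.Iic t)).toReal := by
    intro t
    show (Measure.map q F (Set.Iic t)).toReal = _
    rw [Measure.map_apply hqmeas measurableSet_Iic]
  have hαle : ENNReal.ofReal α ≤ 1 := hQα ▸ prob_le_one
  have hGγ : (fun t => (F.map q (Set.Iic t)).toReal) γ = 1 - α := by
    rw [hGval γ]
    have hc : q ⁻¹' Set.Iic γ = {x | γ < q x}ᶜ := by
      ext x; simp [not_lt]
    rw [hc, measure_compl hQαm (measure_ne_top _ _), measure_univ, hQα,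
      ENNReal.toReal_sub_of_le hαle (by simp), ENNReal.toReal_one,
      ENNReal.toReal_ofReal hα0.le]
  -- choice of δ
  obtain ⟨δ0, hδ0, hball⟩ := Metric.mem_nhds_iff.mp hU
  set Bs : ℕ → Set (Fin d → ℝ) :=
    fun k => q ⁻¹' Set.Icc (γ - 1/(k+1)) (γ + 1/(k+1)) with hBs
  have hBsm : ∀ k, MeasurableSet (Bs k) := fun k => hqmeas measurableSet_Icc
  have hmono : Antitone Bs := by
    intro k l hkl
    apply Set.preimage_mono
    have h1 : 1/((l:ℝ)+1) ≤ 1/((k:ℝ)+1) := by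
      apply one_div_le_one_div_of_le (by positivity)
      exact_mod_cast Nat.add_le_add_right hkl 1
    exact Set.Icc_subset_Icc (by linarith) (by linarith)
  have hiInter : ⋂ k, Bs k = {x | q x = γ} := by
    ext x
    simp only [Set.mem_iInter, hBs, Set.mem_preimage, Set.mem_Icc, Set.mem_setOf_eq]
    constructor
    · intro h
      by_contra hne
      have hd : 0 < |q x - γ| := abs_pos.mpr (sub_ne_zero.mpr hne)
      obtain ⟨k, hk⟩ := exists_nat_one_div_lt hd
      have := h k
      have habs : |q x - γ| ≤ 1/((k:ℝ)+1) := abs_le.mpr ⟨by linarith [this.1], by linarith [this.2]⟩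
      linarith
    · intro h k
      constructor <;> simp [h] <;> positivity
  have htend := tendsto_measure_iInter_atTop (μ := μ)
    (fun k => (hBsm k).nullMeasurableSet) hmono ⟨0, measure_ne_top _ _⟩
  rw [hiInter, hμγ] at htend
  have hev1 : ∀ᶠ k : ℕ in atTop, μ (Bs k) < ENNReal.ofReal (ε/4) := by
    apply htend.eventually_lt_const
    exact ENNReal.ofReal_pos.mpr (by positivity)
  have hev2 : ∀ᶠ k : ℕ in atTop, 1/((k:ℝ)+1) < δ0 := by
    have := tendsto_one_div_add_atTop_nhds_zero_nat (𝕜 := ℝ)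
    exact this.eventually_lt_const hδ0
  obtain ⟨K, hK1, hK2⟩ := (hev1.and hev2).exists
  obtain ⟨B, δ, hδpos, hBmeas, hBmem, hBsmall, hδδ0⟩ :
      ∃ (B : Set (Fin d → ℝ)) (δ : ℝ), 0 < δ ∧ MeasurableSet B ∧
        (∀ z, z ∈ B ↔ γ - δ ≤ q z ∧ q z ≤ γ + δ) ∧ (μ B).toReal ≤ ε/4 ∧ δ < δ0 := by
    refine ⟨Bs K, 1/((K:ℝ)+1), by positivity, hBsm K, ?_, ?_, hK2⟩
    · intro z
      simp [hBs, Set.mem_preimage, Set.mem_Icc]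
    · have := (ENNReal.lt_ofReal_iff_toReal_lt (measure_ne_top _ _)).mp hK1
      linarith
  -- thresholds
  set tp : ℝ := γ + δ/2 with htp
  set tm : ℝ := γ - δ/2 with htm
  have hγU : γ ∈ U := mem_of_mem_nhds hU
  have htpU : tp ∈ U := by
    apply hball
    rw [Metric.mem_ball, Real.dist_eq, htp]
    have h1 : γ + δ/2 - γ = δ/2 := by ring
    rw [h1, abs_of_pos (by positivity)]
    linarith
  have htmU : tm ∈ U := by
    apply hball
    rw [Metric.mem_ball, Real.dist_eq, htm]
    have h1 : γ - δ/2 - γ = -(δ/2) := by ring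
    rw [h1, abs_neg, abs_of_pos (by positivity)]
    linarith
  set Gf : ℝ → ℝ := fun t => (F.map q (Set.Iic t)).toReal with hGf
  set c1 : ℝ := Gf tp - (1 - α) with hc1def
  set c2 : ℝ := (1 - α) - Gf tm with hc2def
  have hc1 : 0 < c1 := by
    have := hGmono hγU htpU (by rw [htp]; linarith)
    rw [hc1def, ← hGγ]
    linarith
  have hc2 : 0 < c2 := by
    have := hGmono htmU hγU (by rw [htm]; linarith)
    rw [hc2def, ← hGγ]
    linarith
  -- the target set
  obtain ⟨T, hTmeas, hTmem⟩ :
      ∃ T : Set (Fin d → ℝ), MeasurableSet T ∧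
        (∀ z, z ∈ T ↔ ((z ∈ Q ∧ q z < γ) ∨ (z ∉ Q ∧ γ ≤ q z))) := by
    refine ⟨(Q ∩ q ⁻¹' Set.Iio γ) ∪ (Qᶜ ∩ q ⁻¹' Set.Ici γ),
      ((hQ.inter (hqmeas measurableSet_Iio)).union (hQ.compl.inter (hqmeas measurableSet_Ici))),
      ?_⟩
    intro z
    simp [Set.mem_union, Set.mem_inter_iff, Set.mem_preimage]
  have hTμ : μ T = μ (Q ∆ {x | γ < q x}) := by
    apply measure_congr
    rw [MeasureTheory.ae_eq_set]
    constructor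
    · refine measure_mono_null ?_ hμγ
      intro x hx
      obtain ⟨hx1, hx2⟩ := hx
      rw [hTmem] at hx1
      rw [Set.mem_symmDiff] at hx2
      push_neg at hx2
      simp only [Set.mem_setOf_eq, not_lt] at hx2 ⊢
      rcases hx1 with ⟨hq1, hq2⟩ | ⟨hq1, hq2⟩
      · exact absurd (hx2.1 hq1) (not_lt.mpr hq2.le)
      · have hnlt : ¬ γ < q x := fun h => hq1 (hx2.2 h)
        exact le_antisymm (not_lt.mp hnlt) hq2
    · refine measure_mono_null ?_ hμγ
      intro x hx
      obtain ⟨hx1, hx2⟩ := hx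
      rw [Set.mem_symmDiff] at hx1
      rw [hTmem] at hx2
      push_neg at hx2
      simp only [Set.mem_setOf_eq, not_lt] at hx1 hx2 ⊢
      rcases hx1 with ⟨hQx, hnQα⟩ | ⟨hQαX, hnQ⟩
      · exact le_antisymm hnQα (hx2.1 hQx)
      · exact absurd hQαX (not_lt.mpr (hx2.2 hnQ).le)
  -- Chebyshev bounds for the X and Z samples
  have hchebX : ∀ (s : ℝ) {c : ℝ}, 0 < c → ∀ {n : ℕ}, 0 < n →
      P {ω | c ≤ |(n : ℝ)⁻¹ * ∑ j ∈ Finset.range n,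
        (if X j ω ∈ q ⁻¹' Set.Iic s then (1 : ℝ) else 0) - (F (q ⁻¹' Set.Iic s)).toReal|}
      ≤ ENNReal.ofReal (1 / (n * c ^ 2)) := fun s _ hc _ hn =>
    cheb_aux P X hXmeas hXind F hXlaw _ (hqmeas measurableSet_Iic) hc hn
  have hchebZ : ∀ (S : Set (Fin d → ℝ)), MeasurableSet S → ∀ {c : ℝ}, 0 < c → ∀ {m : ℕ}, 0 < m →
      P {ω | c ≤ |(m : ℝ)⁻¹ * ∑ j ∈ Finset.range m,
        (if Z j ω ∈ S then (1 : ℝ) else 0) - (μ S).toReal|}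
      ≤ ENNReal.ofReal (1 / (m * c ^ 2)) := fun S hS _ hc _ hm =>
    cheb_aux P Z hZmeas hZind μ hZlaw S hS hc hm
  have h1α : (0:ℝ) < 1 - α := by linarith
  -- size thresholds
  obtain ⟨N1, hN1⟩ := exists_nat_ge (1/(1-α))
  obtain ⟨N2, hN2⟩ := exists_nat_ge (2/c2)
  obtain ⟨N3, hN3⟩ := exists_nat_ge (4/(r*c1^2))
  obtain ⟨N4, hN4⟩ := exists_nat_ge (4/(r*(c2/2)^2))
  obtain ⟨M1, hM1⟩ := exists_nat_ge (4/(r*(ε/2)^2))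
  obtain ⟨M2, hM2⟩ := exists_nat_ge (4/(r*(ε/4)^2))
  refine eventually_atTop.mpr ⟨(max M1 M2 + 1, max (max N1 N2) (max N3 N4) + 1),
    fun p hp => ?_⟩
  obtain ⟨m, n⟩ := p
  have hm : max M1 M2 + 1 ≤ m := hp.1
  have hn : max (max N1 N2) (max N3 N4) + 1 ≤ n := hp.2
  have hm0 : 0 < m := by omega
  have hn0 : 0 < n := by omega
  have hnN1 : (N1:ℝ) ≤ n := Nat.cast_le.mpr (by omega)
  have hnN2 : (N2:ℝ) ≤ n := Nat.cast_le.mpr (by omega)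
  have hnN3 : (N3:ℝ) ≤ n := Nat.cast_le.mpr (by omega)
  have hnN4 : (N4:ℝ) ≤ n := Nat.cast_le.mpr (by omega)
  have hmM1 : (M1:ℝ) ≤ m := Nat.cast_le.mpr (by omega)
  have hmM2 : (M2:ℝ) ≤ m := Nat.cast_le.mpr (by omega)
  have hnR : (0:ℝ) < n := Nat.cast_pos.mpr hn0
  have hmR : (0:ℝ) < m := Nat.cast_pos.mpr hm0
  -- floor facts
  have hk1 : 1 ≤ ⌊(1 - α) * (n:ℝ)⌋₊ := by
    apply Nat.le_floor
    have h' : 1/(1-α) ≤ (n:ℝ) := le_trans hN1 hnN1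
    rw [div_le_iff₀ h1α] at h'
    push_cast
    nlinarith
  have hkn : ⌊(1 - α) * (n:ℝ)⌋₊ ≤ n := by
    have h' : (1-α) * (n:ℝ) ≤ ((n:ℕ):ℝ) := by nlinarith [Nat.cast_nonneg (α := ℝ) n]
    calc ⌊(1-α)*(n:ℝ)⌋₊ ≤ ⌊((n:ℕ):ℝ)⌋₊ := Nat.floor_mono h'
      _ = n := Nat.floor_natCast n
  have hkle : ((⌊(1 - α) * (n:ℝ)⌋₊ : ℕ) : ℝ) ≤ (1-α) * n :=
    Nat.floor_le (by positivity)
  have hkge : (1-α) * (n:ℝ) - 1 < (⌊(1 - α) * (n:ℝ)⌋₊ : ℝ) := Nat.sub_one_lt_floor _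
  have hinvn : (n:ℝ)⁻¹ ≤ c2/2 := by
    have h' : 2/c2 ≤ (n:ℝ) := le_trans hN2 hnN2
    have h2' : 2 ≤ (n:ℝ) * c2 := by rw [div_le_iff₀ hc2] at h'; linarith
    rw [inv_eq_one_div, div_le_div_iff₀ hnR (by norm_num : (0:ℝ) < 2)]
    nlinarith
  -- the four bad events
  set A1 : Set Ω := {ω | c1 ≤ |(n : ℝ)⁻¹ * ∑ j ∈ Finset.range n,
    (if X j ω ∈ q ⁻¹' Set.Iic tp then (1 : ℝ) else 0) - (F (q ⁻¹' Set.Iic tp)).toReal|}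
    with hA1
  set A2 : Set Ω := {ω | c2/2 ≤ |(n : ℝ)⁻¹ * ∑ j ∈ Finset.range n,
    (if X j ω ∈ q ⁻¹' Set.Iic tm then (1 : ℝ) else 0) - (F (q ⁻¹' Set.Iic tm)).toReal|}
    with hA2
  set A3 : Set Ω := {ω | ε/2 ≤ |(m : ℝ)⁻¹ * ∑ j ∈ Finset.range m,
    (if Z j ω ∈ T then (1 : ℝ) else 0) - (μ T).toReal|} with hA3
  set A4 : Set Ω := {ω | ε/4 ≤ |(m : ℝ)⁻¹ * ∑ j ∈ Finset.range m,
    (if Z j ω ∈ B then (1 : ℝ) else 0) - (μ B).toReal|} with hA4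
  refine le_trans (measure_mono (?_ : _ ⊆ A1 ∪ (A2 ∪ (A3 ∪ A4)))) ?_
  · -- the inclusion
    intro ω hω
    simp only [Set.mem_setOf_eq] at hω
    by_contra hnot
    simp only [Set.mem_union, not_or] at hnot
    obtain ⟨h1, h2, h3, h4⟩ := hnot
    rw [hA1] at h1; rw [hA2] at h2; rw [hA3] at h3; rw [hA4] at h4
    simp only [Set.mem_setOf_eq, not_le] at h1 h2 h3 h4
    set gh : ℝ := orderStat (fun j ω' => q (X j ω')) n ⌊(1 - α) * (n:ℝ)⌋₊ ω with hgh
    have hsumcard : ∀ s : ℝ, (∑ j ∈ Finset.range n,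
        (if X j ω ∈ q ⁻¹' Set.Iic s then (1:ℝ) else 0))
        = (((Finset.range n).filter (fun j => q (X j ω) ≤ s)).card : ℝ) := by
      intro s
      simp only [Set.mem_preimage, Set.mem_Iic, Finset.sum_boole]
    -- Claim A : gh < γ + δ
    have hclaimA : gh < γ + δ := by
      by_contra hcon
      push_neg at hcon
      have hcard : ((Finset.range n).filter (fun j => q (X j ω) ≤ tp)).card
          < ⌊(1 - α) * (n:ℝ)⌋₊ := by
        by_contra hc'
        push_neg at hc'
        have hle := orderStat_le_aux (Y := fun j ω' => q (X j ω')) (ω := ω) hk1 hc'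
        rw [← hgh] at hle
        have htpv : tp = γ + δ/2 := htp
        rw [htpv] at hle
        linarith
      have havg : (n:ℝ)⁻¹ * (((Finset.range n).filter (fun j => q (X j ω) ≤ tp)).card : ℝ)
          < 1 - α := by
        have h' : (((Finset.range n).filter (fun j => q (X j ω) ≤ tp)).card : ℝ)
            < (1-α) * n := lt_of_lt_of_le (Nat.cast_lt.mpr hcard) hkle
        calc (n:ℝ)⁻¹ * (((Finset.range n).filter (fun j => q (X j ω) ≤ tp)).card : ℝ)
            < (n:ℝ)⁻¹ * ((1-α)*n) := by
              exact mul_lt_mul_of_pos_left h' (by positivity)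
          _ = 1 - α := by field_simp
      apply absurd h1
      push_neg
      rw [hsumcard tp, ← hGval tp]
      have hGtp : Gf tp = (fun t => (F.map q (Set.Iic t)).toReal) tp := rfl
      have : c1 ≤ -((n:ℝ)⁻¹ * (((Finset.range n).filter
          (fun j => q (X j ω) ≤ tp)).card : ℝ) - Gf tp) := by
        rw [hc1def]; linarith
      exact le_trans this (neg_le_abs _)
    -- Claim B : γ - δ < gh
    have hclaimB : γ - δ < gh := by
      by_contra hcon
      push_neg at hcon
      have hlt : orderStat (fun j ω' => q (X j ω')) n ⌊(1 - α) * (n:ℝ)⌋₊ ω < tm := by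
        rw [← hgh]
        have htmv : tm = γ - δ/2 := htm
        rw [htmv]
        linarith
      have hcard := card_le_of_orderStat_lt_aux hkn hn0 hlt
      have ha1 : (n:ℝ)⁻¹ * ((⌊(1 - α) * (n:ℝ)⌋₊ : ℕ) : ℝ)
          ≤ (n:ℝ)⁻¹ * (((Finset.range n).filter (fun j => q (X j ω) ≤ tm)).card : ℝ) :=
        mul_le_mul_of_nonneg_left (Nat.cast_le.mpr hcard) (by positivity)
      have ha2 : (1 - α) - (n:ℝ)⁻¹ ≤ (n:ℝ)⁻¹ * ((⌊(1 - α) * (n:ℝ)⌋₊ : ℕ) : ℝ) := by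
        have h' : (n:ℝ)⁻¹ * ((1-α)*(n:ℝ) - 1) ≤ (n:ℝ)⁻¹ * ((⌊(1 - α) * (n:ℝ)⌋₊ : ℕ) : ℝ) :=
          mul_le_mul_of_nonneg_left hkge.le (by positivity)
        calc (1 - α) - (n:ℝ)⁻¹ = (n:ℝ)⁻¹ * ((1-α)*(n:ℝ) - 1) := by field_simp
          _ ≤ _ := h'
      apply absurd h2
      push_neg
      rw [hsumcard tm, ← hGval tm]
      have hGtm : Gf tm = (1 - α) - c2 := by rw [hc2def]; ring
      have : c2/2 ≤ (n:ℝ)⁻¹ * (((Finset.range n).filter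
          (fun j => q (X j ω) ≤ tm)).card : ℝ) - Gf tm := by
        rw [hGtm]
        linarith
      exact le_trans this (le_abs_self _)
    -- pointwise comparison on the Z side
    have hpt : ∀ j ∈ Finset.range m,
        |((if q (Z j ω) < gh ∧ Z j ω ∈ Q then (1:ℝ) else 0) +
          (if gh ≤ q (Z j ω) ∧ Z j ω ∉ Q then (1:ℝ) else 0)) -
          (if Z j ω ∈ T then (1:ℝ) else 0)|
        ≤ (if Z j ω ∈ B then (1:ℝ) else 0) := by
      intro j _
      set z := Z j ω with hz
      by_cases hzB : z ∈ B
      · rw [if_pos hzB]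
        have hsum01 : (0:ℝ) ≤ (if q z < gh ∧ z ∈ Q then (1:ℝ) else 0) +
            (if gh ≤ q z ∧ z ∉ Q then (1:ℝ) else 0) ∧
            (if q z < gh ∧ z ∈ Q then (1:ℝ) else 0) +
            (if gh ≤ q z ∧ z ∉ Q then (1:ℝ) else 0) ≤ 1 := by
          by_cases hc1' : q z < gh ∧ z ∈ Q
          · have hc2' : ¬(gh ≤ q z ∧ z ∉ Q) := fun h => absurd hc1'.1 (not_lt.mpr h.1)
            simp [hc1', hc2']
          · by_cases hc2' : gh ≤ q z ∧ z ∉ Q <;> simp [hc1', hc2']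
        have hT01 : (0:ℝ) ≤ (if z ∈ T then (1:ℝ) else 0) ∧
            (if z ∈ T then (1:ℝ) else 0) ≤ 1 := by split_ifs <;> norm_num
        rw [abs_le]
        constructor <;> linarith [hsum01.1, hsum01.2, hT01.1, hT01.2]
      · rw [if_neg hzB]
        rw [hBmem] at hzB
        push_neg at hzB
        rcases (by by_cases h' : γ - δ ≤ q z
                   · exact Or.inr (hzB h')
                   · exact Or.inl (not_le.mp h') : q z < γ - δ ∨ γ + δ < q z) with h' | h'
        · have hlt : q z < gh := by linarith
          have hltγ : q z < γ := by linarith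
          by_cases hzQ : z ∈ Q
          · have hTz : z ∈ T := (hTmem z).mpr (Or.inl ⟨hzQ, hltγ⟩)
            simp [hzQ, hTz, hlt, not_le.mpr hlt]
          · have hTz : z ∉ T := fun h => by
              rcases (hTmem z).mp h with ⟨h1', _⟩ | ⟨_, h2'⟩
              · exact hzQ h1'
              · exact absurd h2' (not_le.mpr hltγ)
            simp [hzQ, hTz, hlt, not_le.mpr hlt]
        · have hge : gh ≤ q z := by linarith
          have hgtγ : γ ≤ q z := by linarith
          by_cases hzQ : z ∈ Q
          · have hTz : z ∉ T := fun h => by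
              rcases (hTmem z).mp h with ⟨_, h2'⟩ | ⟨h1', _⟩
              · exact absurd hgtγ (not_le.mpr h2')
              · exact h1' hzQ
            simp [hzQ, hTz, not_lt.mpr hge, hge]
          · have hTz : z ∈ T := (hTmem z).mpr (Or.inr ⟨hzQ, hgtγ⟩)
            simp [hzQ, hTz, not_lt.mpr hge, hge]
    -- assemble
    have hcomb : (m:ℝ)⁻¹ * (∑ j ∈ Finset.range m,
          (if q (Z j ω) < gh ∧ Z j ω ∈ Q then (1:ℝ) else 0)) +
        (m:ℝ)⁻¹ * (∑ j ∈ Finset.range m,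
          (if gh ≤ q (Z j ω) ∧ Z j ω ∉ Q then (1:ℝ) else 0))
        = (m:ℝ)⁻¹ * ∑ j ∈ Finset.range m,
          ((if q (Z j ω) < gh ∧ Z j ω ∈ Q then (1:ℝ) else 0) +
           (if gh ≤ q (Z j ω) ∧ Z j ω ∉ Q then (1:ℝ) else 0)) := by
      rw [← mul_add, ← Finset.sum_add_distrib]
    have hdiffbound : |(m:ℝ)⁻¹ * (∑ j ∈ Finset.range m,
          ((if q (Z j ω) < gh ∧ Z j ω ∈ Q then (1:ℝ) else 0) +
           (if gh ≤ q (Z j ω) ∧ Z j ω ∉ Q then (1:ℝ) else 0))) -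
        (m:ℝ)⁻¹ * (∑ j ∈ Finset.range m, (if Z j ω ∈ T then (1:ℝ) else 0))|
        ≤ (m:ℝ)⁻¹ * ∑ j ∈ Finset.range m, (if Z j ω ∈ B then (1:ℝ) else 0) := by
      rw [← mul_sub, ← Finset.sum_sub_distrib, abs_mul, abs_of_nonneg (by positivity)]
      apply mul_le_mul_of_nonneg_left _ (by positivity)
      exact le_trans (Finset.abs_sum_le_sum_abs _ _) (Finset.sum_le_sum hpt)
    have havgB : (m:ℝ)⁻¹ * ∑ j ∈ Finset.range m, (if Z j ω ∈ B then (1:ℝ) else 0)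
        < ε/2 := by
      have hb := hBsmall
      have h4' : |(m:ℝ)⁻¹ * ∑ j ∈ Finset.range m,
          (if Z j ω ∈ B then (1:ℝ) else 0) - (μ B).toReal| < ε/4 := h4
      have := abs_lt.mp h4'
      linarith [this.1, this.2]
    have hTS : (μ T).toReal = (μ (Q ∆ {x | γ < q x})).toReal := by rw [hTμ]
    rw [Real.dist_eq] at hω
    have h3' := abs_lt.mp h3
    have habs : |((m:ℝ)⁻¹ * (∑ j ∈ Finset.range m,
          (if q (Z j ω) < gh ∧ Z j ω ∈ Q then (1:ℝ) else 0)) +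
        (m:ℝ)⁻¹ * (∑ j ∈ Finset.range m,
          (if gh ≤ q (Z j ω) ∧ Z j ω ∉ Q then (1:ℝ) else 0))) -
        (μ (Q ∆ {x | γ < q x})).toReal| < ε := by
      rw [hcomb, ← hTS]
      calc |(m:ℝ)⁻¹ * (∑ j ∈ Finset.range m,
            ((if q (Z j ω) < gh ∧ Z j ω ∈ Q then (1:ℝ) else 0) +
             (if gh ≤ q (Z j ω) ∧ Z j ω ∉ Q then (1:ℝ) else 0))) - (μ T).toReal|
          ≤ |(m:ℝ)⁻¹ * (∑ j ∈ Finset.range m,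
            ((if q (Z j ω) < gh ∧ Z j ω ∈ Q then (1:ℝ) else 0) +
             (if gh ≤ q (Z j ω) ∧ Z j ω ∉ Q then (1:ℝ) else 0))) -
            (m:ℝ)⁻¹ * (∑ j ∈ Finset.range m, (if Z j ω ∈ T then (1:ℝ) else 0))| +
            |(m:ℝ)⁻¹ * (∑ j ∈ Finset.range m, (if Z j ω ∈ T then (1:ℝ) else 0)) -
            (μ T).toReal| := abs_sub_le _ _ _
        _ < ε := by
            have := hdiffbound
            linarith [hdiffbound, havgB, h3'.1, h3'.2, abs_lt.mp h3]
    exact absurd hω (not_le.mpr habs)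
  · -- the measure bound
    have hPA1 : P A1 ≤ ENNReal.ofReal (r/4) := by
      rw [hA1]
      refine le_trans (hchebX tp hc1 hn0) (ENNReal.ofReal_le_ofReal ?_)
      exact inv_bound_aux hc1 hr0 (le_trans hN3 hnN3) hn0
    have hPA2 : P A2 ≤ ENNReal.ofReal (r/4) := by
      rw [hA2]
      refine le_trans (hchebX tm (c := c2/2) (by positivity) hn0) (ENNReal.ofReal_le_ofReal ?_)
      exact inv_bound_aux (by positivity) hr0 (le_trans hN4 hnN4) hn0
    have hPA3 : P A3 ≤ ENNReal.ofReal (r/4) := by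
      rw [hA3]
      refine le_trans (hchebZ T hTmeas (c := ε/2) (by positivity) hm0) (ENNReal.ofReal_le_ofReal ?_)
      exact inv_bound_aux (by positivity) hr0 (le_trans hM1 hmM1) hm0
    have hPA4 : P A4 ≤ ENNReal.ofReal (r/4) := by
      rw [hA4]
      refine le_trans (hchebZ B hBmeas (c := ε/4) (by positivity) hm0) (ENNReal.ofReal_le_ofReal ?_)
      exact inv_bound_aux (by positivity) hr0 (le_trans hM2 hmM2) hm0
    calc P (A1 ∪ (A2 ∪ (A3 ∪ A4)))
        ≤ P A1 + P (A2 ∪ (A3 ∪ A4)) := measure_union_le _ _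
      _ ≤ P A1 + (P A2 + P (A3 ∪ A4)) := by
          exact add_le_add_right (measure_union_le _ _) _
      _ ≤ P A1 + (P A2 + (P A3 + P A4)) := by
          exact add_le_add_right (add_le_add_right (measure_union_le _ _) _) _
      _ ≤ ENNReal.ofReal (r/4) + (ENNReal.ofReal (r/4) +
          (ENNReal.ofReal (r/4) + ENNReal.ofReal (r/4))) := by
          exact add_le_add hPA1 (add_le_add hPA2 (add_le_add hPA3 hPA4))
      _ = ENNReal.ofReal r := by
          rw [← ENNReal.ofReal_add (by positivity) (by positivity),
            ← ENNReal.ofReal_add (by positivity) (by positivity),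
            ← ENNReal.ofReal_add (by positivity) (by positivity)]
          congr 1
          ring
      _ ≤ η := hrη
end

section
/- Let f : ℝ^d → [0, ∞) be continuous and let Q* ⊆ ℝ^d. Suppose that for every pair of closed axis-parallel boxes H ⊆ Q* and H′ ⊆ ℝ^d \ Q* (products of closed intervals of positive length) of equal Lebesgue volume, one has ∫_H f(x) dx ≥ ∫_{H′} f(x) dx. Then f(x) ≥ f(x′) for every x in the topological interior of Q* and every x′ in the topological interior of ℝ^d \ Q*. -/
open MeasureTheory Set
open scoped ENNReal

/-- Let `f : ℝ^d → [0, ∞)` be continuous and `Qs ⊆ ℝ^d`.  Suppose that for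
every pair of closed axis-parallel boxes `Icc a b ⊆ Qs` and `Icc a' b' ⊆ Qsᶜ` with all sides
of positive length and equal Lebesgue volume, `∫_{Icc a b} f ≥ ∫_{Icc a' b'} f`.  Then
`f x ≥ f x'` for every `x` in the interior of `Qs` and every `x'` in the interior of the
complement `Qsᶜ`. -/
theorem box_mass_domination_implies_pointwise {d : ℕ}
    (f : (Fin d → ℝ) → ℝ) (hf : Continuous f) (hf0 : ∀ x, 0 ≤ f x)
    (Qs : Set (Fin d → ℝ))
    (hbox : ∀ a b a' b' : Fin d → ℝ, (∀ i, a i < b i) → (∀ i, a' i < b' i) →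
      Set.Icc a b ⊆ Qs → Set.Icc a' b' ⊆ Qsᶜ →
      volume (Set.Icc a b) = volume (Set.Icc a' b') →
      (∫ x in Set.Icc a' b', f x) ≤ ∫ x in Set.Icc a b, f x) :
    ∀ x ∈ interior Qs, ∀ x' ∈ interior Qsᶜ, f x' ≤ f x := by
  intro x hx x' hx'
  rcases Nat.eq_zero_or_pos d with hd | hd
  · subst hd
    exfalso
    have h1 : x ∈ Qs := interior_subset hx
    have h2 : x' ∈ Qsᶜ := interior_subset hx'
    have hxx : x = x' := funext fun i => i.elim0
    exact h2 (hxx ▸ h1)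
  · refine le_of_forall_pos_le_add ?_
    intro ε hε
    obtain ⟨r1, hr1, hball1⟩ := Metric.mem_nhds_iff.mp (mem_interior_iff_mem_nhds.mp hx)
    obtain ⟨r2, hr2, hball2⟩ := Metric.mem_nhds_iff.mp (mem_interior_iff_mem_nhds.mp hx')
    obtain ⟨d1, hd1, hcont1⟩ :=
      Metric.continuousAt_iff.mp (hf.continuousAt (x := x)) (ε/2) (by linarith)
    obtain ⟨d2, hd2, hcont2⟩ :=
      Metric.continuousAt_iff.mp (hf.continuousAt (x := x')) (ε/2) (by linarith)
    set δ : ℝ := min (min r1 r2) (min d1 d2) / 2 with hδdef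
    have hδ : 0 < δ := by positivity
    have hδr1 : δ < r1 := by
      have := min_le_left (min r1 r2) (min d1 d2)
      have := min_le_left r1 r2
      simp only [hδdef]; linarith
    have hδr2 : δ < r2 := by
      have := min_le_left (min r1 r2) (min d1 d2)
      have := min_le_right r1 r2
      simp only [hδdef]; linarith
    have hδd1 : δ < d1 := by
      have := min_le_right (min r1 r2) (min d1 d2)
      have := min_le_left d1 d2
      simp only [hδdef]; linarith
    have hδd2 : δ < d2 := by
      have := min_le_right (min r1 r2) (min d1 d2)
      have := min_le_right d1 d2
      simp only [hδdef]; linarith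
    -- cubes
    have hdist : ∀ c : Fin d → ℝ, ∀ y ∈ Icc (fun i => c i - δ) (fun i => c i + δ),
        dist y c ≤ δ := by
      intro c y hy
      refine (dist_pi_le_iff hδ.le).mpr fun i => ?_
      rw [Real.dist_eq]
      have h1 : c i - δ ≤ y i := hy.1 i
      have h2 : y i ≤ c i + δ := hy.2 i
      exact abs_le.mpr ⟨by linarith, by linarith⟩
    have hlt : ∀ i : Fin d, (fun i => x i - δ) i < (fun i => x i + δ) i := fun i => by
      simp; linarith
    have hlt' : ∀ i : Fin d, (fun i => x' i - δ) i < (fun i => x' i + δ) i := fun i => by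
      simp; linarith
    have hsub : Icc (fun i => x i - δ) (fun i => x i + δ) ⊆ Qs := fun y hy =>
      hball1 (by simpa [Metric.mem_ball] using lt_of_le_of_lt (hdist x y hy) hδr1)
    have hsub' : Icc (fun i => x' i - δ) (fun i => x' i + δ) ⊆ Qsᶜ := fun y hy =>
      hball2 (by simpa [Metric.mem_ball] using lt_of_le_of_lt (hdist x' y hy) hδr2)
    have hvol : ∀ c : Fin d → ℝ,
        volume (Icc (fun i => c i - δ) (fun i => c i + δ)) = ENNReal.ofReal (2*δ) ^ d := by
      intro c
      rw [Real.volume_Icc_pi]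
      have h2 : ∀ i : Fin d, (c i + δ) - (c i - δ) = 2*δ := fun i => by ring
      simp [h2]
    set V : ℝ := (2*δ) ^ d with hVdef
    have hV : 0 < V := by positivity
    have hvolR : ∀ c : Fin d → ℝ,
        (volume (Icc (fun i => c i - δ) (fun i => c i + δ))).toReal = V := by
      intro c
      rw [hvol c, ENNReal.toReal_pow, ENNReal.toReal_ofReal (by positivity)]
    have hfin : ∀ c : Fin d → ℝ,
        volume (Icc (fun i => c i - δ) (fun i => c i + δ)) < ⊤ := by
      intro c
      rw [hvol c]
      exact ENNReal.pow_lt_top ENNReal.ofReal_lt_top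
    have hint : ∀ c : Fin d → ℝ,
        IntegrableOn f (Icc (fun i => c i - δ) (fun i => c i + δ)) :=
      fun c => hf.continuousOn.integrableOn_compact isCompact_Icc
    -- upper bound on Q* cube
    have hup : ∫ y in Icc (fun i => x i - δ) (fun i => x i + δ), f y ≤ (f x + ε/2) * V := by
      calc ∫ y in Icc (fun i => x i - δ) (fun i => x i + δ), f y
          ≤ ∫ _y in Icc (fun i => x i - δ) (fun i => x i + δ), (f x + ε/2) := by
            refine setIntegral_mono_on (hint x)
              (integrableOn_const (hfin x).ne) measurableSet_Icc fun y hy => ?_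
            have := hcont1 (lt_of_le_of_lt (hdist x y hy) hδd1)
            rw [Real.dist_eq] at this
            have := abs_lt.mp this
            linarith [this.1, this.2]
        _ = (f x + ε/2) * V := by
            rw [setIntegral_const, smul_eq_mul, measureReal_def, hvolR x, mul_comm]
    -- lower bound on complement cube
    have hlo : (f x' - ε/2) * V ≤ ∫ y in Icc (fun i => x' i - δ) (fun i => x' i + δ), f y := by
      calc (f x' - ε/2) * V
          = ∫ _y in Icc (fun i => x' i - δ) (fun i => x' i + δ), (f x' - ε/2) := by
            rw [setIntegral_const, smul_eq_mul, measureReal_def, hvolR x', mul_comm]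
        _ ≤ ∫ y in Icc (fun i => x' i - δ) (fun i => x' i + δ), f y := by
            refine setIntegral_mono_on
              (integrableOn_const (hfin x').ne) (hint x') measurableSet_Icc
              fun y hy => ?_
            have := hcont2 (lt_of_le_of_lt (hdist x' y hy) hδd2)
            rw [Real.dist_eq] at this
            have := abs_lt.mp this
            linarith [this.1, this.2]
    have hmain := hbox _ _ _ _ hlt hlt' hsub hsub' (by rw [hvol x, hvol x'])
    have : (f x' - ε/2) * V ≤ (f x + ε/2) * V := le_trans hlo (le_trans hmain hup)
    have := (mul_le_mul_iff_of_pos_right hV).mp this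
    linarith
end
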